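/- arXiv:2302.13237 — 3 statements merged into one kernel-verified Lean document; each statement's English description precedes it below -/
import Mathlib

section
/- Let k ≥ 1, n₁,...,n_k ≥ 2, n = Σ n_i, and fix i with 1 ≤ i ≤ k. If 𝒢_i is the cycle C_{2^{n_i}}, then Σ_{j=1}^{2^{n_i−1}} θ(n, ξ_{n₁...n_k}^{-1}(ℬ_{ij})) = 2^{n−n_i}(3·2^{2n_i−3} − 2^{n_i−1}), where ℬ_{ij} = N_{2^{n₁}} × ⋯ × F_j^{n_i} × ⋯ × N_{2^{n_k}} with F_j^{n_i} = {j,...,j+2^{n_i−1}−1} in the i-th coordinate and the full set N_{2^{n_l}} = {1,...,2^{n_l}} in every other coordinate. -/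
open Finset

/-- Number of coordinates in which two 0-1 vectors differ. -/
def diffCount {n : ℕ} (u v : Fin n → Bool) : ℕ :=
  (Finset.univ.filter fun i => u i ≠ v i).card

/-- Adjacency in the hypercube `Q_n`: differ in exactly one coordinate. -/
def cubeAdj {n : ℕ} (u v : Fin n → Bool) : Prop := diffCount u v = 1

instance {n : ℕ} (u v : Fin n → Bool) : Decidable (cubeAdj u v) :=
  inferInstanceAs (Decidable (diffCount u v = 1))

/-- `theta n S`: number of edges of `Q_n` with exactly one endpoint in `S`. -/
def theta (n : ℕ) (S : Finset (Fin n → Bool)) : ℕ :=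
  ((Finset.univ ×ˢ Finset.univ).filter fun p : (Fin n → Bool) × (Fin n → Bool) =>
    p.1 ∈ S ∧ p.2 ∉ S ∧ cubeAdj p.1 p.2).card

/-- The reflected Gray code map `ξ_n : {0,1}^n → {1,...,2^n}`. -/
def gray : (n : ℕ) → (Fin n → Bool) → ℕ
  | 0, _ => 1
  | n + 1, v =>
    if v 0 = false then gray n (fun i => v i.succ)
    else 2 ^ (n + 1) + 1 - gray n (fun i => v i.succ)

/-- Wirelength of an embedding `f` of `Q_n` into a host with distance `d`. -/
def wirelength {n : ℕ} {α : Type*} (d : α → α → ℕ) (f : (Fin n → Bool) → α) : ℕ :=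
  (∑ u : Fin n → Bool, ∑ v : Fin n → Bool, if cubeAdj u v then d (f u) (f v) else 0) / 2

/-- Cyclic distance on the cycle with `m` vertices labeled `1,...,m`. -/
def cycDist (m a b : ℕ) : ℕ := min (Nat.dist a b) (m - Nat.dist a b)

/-- The 2-order Gray code map. -/
def gray2 (n₁ n₂ : ℕ) (v : Fin (n₁ + n₂) → Bool) : ℕ × ℕ :=
  (gray n₁ fun i => v (Fin.castAdd n₂ i), gray n₂ fun i => v (Fin.natAdd n₁ i))
/-- Offset of the `i`-th block in the concatenation of blocks of sizes `n j`. -/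
def blockOffset {k : ℕ} (n : Fin k → ℕ) (i : Fin k) : ℕ :=
  ∑ j ∈ Finset.univ.filter (fun j => j < i), n j

lemma blockPos_lt {k : ℕ} (n : Fin k → ℕ) (i : Fin k) (t : Fin (n i)) :
    blockOffset n i + (t : ℕ) < ∑ j, n j := by
  have ht : (t : ℕ) < n i := t.isLt
  calc blockOffset n i + (t : ℕ) < blockOffset n i + n i := by omega
    _ = ∑ j ∈ insert i (Finset.univ.filter (fun j => j < i)), n j := by
        rw [Finset.sum_insert (by simp), Nat.add_comm]; rfl
    _ ≤ ∑ j, n j := Finset.sum_le_sum_of_subset (Finset.subset_univ _)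

/-- The position in `Fin (∑ j, n j)` of the `t`-th coordinate of the `i`-th block. -/
def blockPos {k : ℕ} (n : Fin k → ℕ) (i : Fin k) (t : Fin (n i)) : Fin (∑ j, n j) :=
  ⟨blockOffset n i + (t : ℕ), blockPos_lt n i t⟩

/-- The `i`-th block of a concatenated 0-1 vector. -/
def block {k : ℕ} (n : Fin k → ℕ) (v : Fin (∑ j, n j) → Bool) (i : Fin k) :
    Fin (n i) → Bool :=
  fun t => v (blockPos n i t)

/-- Splitting map realizing the identification `{0,1}^n ≅ ∏ {0,1}^{n_i}`. -/
def split {k : ℕ} (n : Fin k → ℕ) (v : Fin (∑ j, n j) → Bool) :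
    (i : Fin k) → Fin (n i) → Bool :=
  fun i => block n v i

/-- The `k`-order Gray code map `ξ_{n₁…n_k}`. -/
def grayK {k : ℕ} (n : Fin k → ℕ) (v : Fin (∑ j, n j) → Bool) : Fin k → ℕ :=
  fun i => gray (n i) (block n v i)

lemma gray_succ (p : ℕ) (b : Bool) (x : Fin p → Bool) :
    gray (p+1) (Fin.cons b x) = if b = false then gray p x else 2^(p+1)+1 - gray p x := by
  simp [gray, Fin.cons_zero, Fin.cons_succ]

lemma gray_mem (p : ℕ) (x : Fin p → Bool) : 1 ≤ gray p x ∧ gray p x ≤ 2^p := by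
  induction p with
  | zero => simp [gray]
  | succ p ih =>
    have h := ih (fun i => x i.succ)
    have h2 : (2:ℕ)^(p+1) = 2*2^p := by ring
    by_cases hx : x 0 = false <;> simp [gray, hx] <;> omega

lemma Icc_one (x : ℕ) : Icc 1 x = Ioc 0 x := by ext; simp; omega

lemma sum_Icc_reflect (N : ℕ) (f : ℕ → ℕ) :
    ∑ a ∈ Icc 1 N, f (N+1-a) = ∑ a ∈ Icc 1 N, f a := by
  apply Finset.sum_nbij' (fun a => N+1-a) (fun a => N+1-a) <;>
    (intro a ha; simp [mem_Icc] at *) <;> omega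

lemma sum_Icc_shiftrefl (N : ℕ) (f : ℕ → ℕ) :
    ∑ a ∈ Icc 1 N, f (2*N+1-a) = ∑ a ∈ Icc (N+1) (2*N), f a := by
  apply Finset.sum_nbij' (fun a => 2*N+1-a) (fun a => 2*N+1-a) <;>
    (intro a ha; simp [mem_Icc] at *) <;> omega

lemma sum_cube_cons (p : ℕ) (F : (Fin (p+1) → Bool) → ℕ) :
    ∑ x : Fin (p+1) → Bool, F x = ∑ b : Bool, ∑ x : Fin p → Bool, F (Fin.cons b x) := by
  have h := Fintype.sum_equiv (Fin.consEquiv (fun _ : Fin (p+1) => Bool))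
    (fun z => F (Fin.cons z.1 z.2)) F (fun z => by simp [Fin.consEquiv])
  rw [← h, Fintype.sum_prod_type]

lemma sum_gray (p : ℕ) (f : ℕ → ℕ) :
    ∑ x : Fin p → Bool, f (gray p x) = ∑ a ∈ Icc 1 (2^p), f a := by
  induction p generalizing f with
  | zero => simp [gray]
  | succ p ih =>
    have hp : (2:ℕ)^(p+1) = 2*2^p := by ring
    rw [sum_cube_cons p (fun x => f (gray (p+1) x)), Fintype.sum_bool]
    simp only [gray_succ]
    norm_num
    have h2 : ∑ x : Fin p → Bool, f (2^(p+1)+1 - gray p x)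
        = ∑ a ∈ Icc (2^p+1) (2^(p+1)), f a := by
      rw [ih (fun a => f (2^(p+1)+1 - a))]
      simp only [hp]
      exact sum_Icc_shiftrefl (2^p) f
    rw [h2, ih]
    rw [Icc_one, Icc_one, show Finset.Icc (2^p+1) (2^(p+1)) = Finset.Ioc (2^p) (2^(p+1)) by
      ext; simp]
    rw [add_comm, Finset.sum_Ioc_consecutive]
    · exact Nat.zero_le _
    · exact Nat.pow_le_pow_right (by norm_num) (Nat.le_succ p)

-- diffCount basics
lemma diffCount_sum {n : ℕ} (u v : Fin n → Bool) :
    diffCount u v = ∑ q, if u q ≠ v q then 1 else 0 := by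
  simp [diffCount, Finset.card_filter]

lemma diffCount_comm {n : ℕ} (u v : Fin n → Bool) : diffCount u v = diffCount v u := by
  simp [diffCount, ne_comm]

lemma diffCount_eq_zero {n : ℕ} (u v : Fin n → Bool) : diffCount u v = 0 ↔ u = v := by
  simp [diffCount, Finset.card_eq_zero, Finset.filter_eq_empty_iff, funext_iff]

lemma diffCount_cons {p : ℕ} (b c : Bool) (x y : Fin p → Bool) :
    diffCount (Fin.cons b x) (Fin.cons c y) = (if b = c then 0 else 1) + diffCount x y := by
  rw [diffCount_sum, diffCount_sum, Fin.sum_univ_succ]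
  simp only [Fin.cons_zero, Fin.cons_succ]
  by_cases h : b = c <;> simp [h]

-- bijectivity of blockPos as a sigma map
lemma blockOffset_mono {k : ℕ} (n : Fin k → ℕ) {i i' : Fin k} (h : i < i') :
    blockOffset n i + n i ≤ blockOffset n i' := by
  have : (insert i (Finset.univ.filter (fun j => j < i))) ⊆ Finset.univ.filter (fun j => j < i') := by
    intro j hj
    simp only [Finset.mem_insert, Finset.mem_filter, Finset.mem_univ, true_and] at *
    rcases hj with rfl | hj
    · exact h
    · exact lt_trans hj h
  calc blockOffset n i + n i
      = ∑ j ∈ insert i (Finset.univ.filter (fun j => j < i)), n j := by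
        rw [Finset.sum_insert (by simp), Nat.add_comm]; rfl
    _ ≤ _ := Finset.sum_le_sum_of_subset this

lemma blockPosSigma_bij {k : ℕ} (n : Fin k → ℕ) :
    Function.Bijective (fun s : Σ l, Fin (n l) => blockPos n s.1 s.2) := by
  rw [Fintype.bijective_iff_injective_and_card]
  constructor
  · rintro ⟨i, t⟩ ⟨i', t'⟩ h
    simp only [blockPos, Fin.mk.injEq] at h
    rcases lt_trichotomy i i' with hlt | rfl | hlt
    · have := blockOffset_mono n hlt
      have := t.isLt
      omega
    · have : (t:ℕ) = (t':ℕ) := by omega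
      simp [Fin.ext_iff, this]
    · have := blockOffset_mono n hlt
      have := t'.isLt
      omega
  · simp [Fintype.card_sigma]

lemma split_bij {k : ℕ} (n : Fin k → ℕ) : Function.Bijective (split n) := by
  rw [Fintype.bijective_iff_injective_and_card]
  constructor
  · intro u v h
    funext q
    obtain ⟨⟨l, t⟩, rfl⟩ := (blockPosSigma_bij n).2 q
    exact congrFun (congrFun h l) t
  · simp [Fintype.card_pi, Finset.prod_pow_eq_pow_sum]

lemma diffCount_split {k : ℕ} (n : Fin k → ℕ) (u v : Fin (∑ j, n j) → Bool) :
    diffCount u v = ∑ l, diffCount (split n u l) (split n v l) := by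
  rw [diffCount_sum]
  have h := Fintype.sum_bijective _ (blockPosSigma_bij n)
    (fun s : Σ l, Fin (n l) => if u (blockPos n s.1 s.2) ≠ v (blockPos n s.1 s.2) then 1 else 0)
    (fun q => if u q ≠ v q then 1 else 0) (fun s => rfl)
  rw [← h]
  rw [← Finset.univ_sigma_univ, Finset.sum_sigma]
  exact Finset.sum_congr rfl fun l _ => (diffCount_sum _ _).symm

def Cc (m a b : ℕ) : ℕ :=
  ((Finset.Icc 1 m).filter fun j => a ∈ Finset.Icc j (j+m-1) ∧ b ∉ Finset.Icc j (j+m-1)).card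

lemma Cc_add_Cc (m a b : ℕ) (hm : 1 ≤ m) (ha1 : 1 ≤ a) (ha2 : a ≤ 2*m)
    (hb1 : 1 ≤ b) (hb2 : b ≤ 2*m) :
    Cc m a b + Cc m b a = cycDist (2*m) a b := by
  have hA : ∀ x : ℕ, ((Finset.Icc 1 m).filter fun j => x ∈ Finset.Icc j (j+m-1))
      = Finset.Icc (max (x+1-m) 1) (min x m) := by
    intro x; ext j; simp [Finset.mem_Icc, Finset.mem_filter]; omega
  have hI : ((Finset.Icc 1 m).filter fun j =>
        a ∈ Finset.Icc j (j+m-1) ∧ b ∈ Finset.Icc j (j+m-1))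
      = Finset.Icc (max (max (a+1-m) (b+1-m)) 1) (min (min a b) m) := by
    ext j; simp [Finset.mem_Icc]; omega
  have hI' : ((Finset.Icc 1 m).filter fun j =>
        b ∈ Finset.Icc j (j+m-1) ∧ a ∈ Finset.Icc j (j+m-1))
      = Finset.Icc (max (max (a+1-m) (b+1-m)) 1) (min (min a b) m) := by
    ext j; simp [Finset.mem_Icc]; omega
  have h1 := Finset.card_filter_add_card_filter_not
    (s := (Finset.Icc 1 m).filter fun j => a ∈ Finset.Icc j (j+m-1))
    (p := fun j => b ∈ Finset.Icc j (j+m-1))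
  have h2 := Finset.card_filter_add_card_filter_not
    (s := (Finset.Icc 1 m).filter fun j => b ∈ Finset.Icc j (j+m-1))
    (p := fun j => a ∈ Finset.Icc j (j+m-1))
  simp only [Finset.filter_filter] at h1 h2
  rw [hI] at h1
  rw [hI'] at h2
  rw [hA a] at h1
  rw [hA b] at h2
  have e1 : ((Finset.Icc 1 m).filter fun j =>
      a ∈ Finset.Icc j (j+m-1) ∧ ¬ b ∈ Finset.Icc j (j+m-1)).card = Cc m a b := rfl
  have e2 : ((Finset.Icc 1 m).filter fun j =>
      b ∈ Finset.Icc j (j+m-1) ∧ ¬ a ∈ Finset.Icc j (j+m-1)).card = Cc m b a := rfl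
  rw [e1] at h1
  rw [e2] at h2
  simp only [Nat.card_Icc] at h1 h2
  unfold cycDist Nat.dist
  omega

-- numeric sums
lemma sum_odd (N : ℕ) : ∑ a ∈ Icc 1 N, (2*a-1) = N*N := by
  induction N with
  | zero => simp
  | succ N ih =>
    rw [Finset.sum_Icc_succ_top (by omega), ih]
    ring_nf
    omega

lemma sum_lin (N : ℕ) : ∑ a ∈ Icc 1 N, (2*N+1-2*a) = N*N := by
  have h : ∑ a ∈ Icc 1 N, (2*N+1-2*a) = ∑ a ∈ Icc 1 N, (2*(N+1-a)-1) := by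
    apply Finset.sum_congr rfl; intro a ha; simp [mem_Icc] at ha; omega
  rw [h, sum_Icc_reflect N (fun b => 2*b-1), sum_odd]

lemma sum_min (h : ℕ) :
    ∑ a ∈ Icc 1 (2*h), min (2*(2*h)+1-2*a) (2*a-1) = 2*(h*h) := by
  have hsplit : Icc 1 (2*h) = Ioc 0 (2*h) := Icc_one _
  rw [hsplit, ← Finset.sum_Ioc_consecutive _ (Nat.zero_le h) (by omega)]
  have h1 : ∑ a ∈ Ioc 0 h, min (2*(2*h)+1-2*a) (2*a-1) = h*h := by
    rw [← Icc_one]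
    rw [show ∑ a ∈ Icc 1 h, min (2*(2*h)+1-2*a) (2*a-1) = ∑ a ∈ Icc 1 h, (2*a-1) from
      Finset.sum_congr rfl fun a ha => by simp [mem_Icc] at ha; omega]
    exact sum_odd h
  have h2 : ∑ a ∈ Ioc h (2*h), min (2*(2*h)+1-2*a) (2*a-1) = h*h := by
    rw [show Ioc h (2*h) = Icc (h+1) (2*h) by ext; simp]
    rw [← sum_Icc_shiftrefl h (fun a => min (2*(2*h)+1-2*a) (2*a-1))]
    rw [show ∑ a ∈ Icc 1 h, min (2*(2*h)+1-2*(2*h+1-a)) (2*(2*h+1-a)-1)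
        = ∑ a ∈ Icc 1 h, (2*a-1) from
      Finset.sum_congr rfl fun a ha => by simp [mem_Icc] at ha; omega]
    exact sum_odd h
  rw [h1, h2]; ring

-- generic recursion
lemma cube_pair_rec (p : ℕ) (d : ℕ → ℕ → ℕ) :
    (∑ x : Fin (p+1) → Bool, ∑ y : Fin (p+1) → Bool,
      if diffCount x y = 1 then d (gray (p+1) x) (gray (p+1) y) else 0)
    = ((∑ x : Fin p → Bool, ∑ y : Fin p → Bool,
        if diffCount x y = 1 then d (2^(p+1)+1-gray p x) (2^(p+1)+1-gray p y) else 0)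
      + ∑ a ∈ Icc 1 (2^p), d (2^(p+1)+1-a) a)
      + ((∑ a ∈ Icc 1 (2^p), d a (2^(p+1)+1-a))
      + (∑ x : Fin p → Bool, ∑ y : Fin p → Bool,
        if diffCount x y = 1 then d (gray p x) (gray p y) else 0)) := by
  have expand : ∀ G : (Fin (p+1) → Bool) → (Fin (p+1) → Bool) → ℕ,
      ∑ x : Fin (p+1) → Bool, ∑ y : Fin (p+1) → Bool, G x y
      = ∑ b : Bool, ∑ c : Bool, ∑ x : Fin p → Bool, ∑ y : Fin p → Bool,
          G (Fin.cons b x) (Fin.cons c y) := by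
    intro G
    rw [sum_cube_cons p (fun x => ∑ y, G x y)]
    apply Finset.sum_congr rfl; intro b _
    rw [show (∑ x : Fin p → Bool, ∑ y : Fin (p+1) → Bool, G (Fin.cons b x) y)
        = ∑ x : Fin p → Bool, ∑ c : Bool, ∑ y : Fin p → Bool,
            G (Fin.cons b x) (Fin.cons c y) from
      Finset.sum_congr rfl fun x _ => sum_cube_cons p (fun y => G (Fin.cons b x) y)]
    exact Finset.sum_comm
  rw [expand]
  simp only [diffCount_cons, gray_succ, Fintype.sum_bool]
  norm_num
  have cross : ∀ (A B : ℕ → ℕ),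
      (∑ x : Fin p → Bool, ∑ y : Fin p → Bool,
        if diffCount x y = 0 then d (A (gray p x)) (B (gray p y)) else 0)
      = ∑ a ∈ Icc 1 (2^p), d (A a) (B a) := by
    intro A B
    have step : ∀ x : Fin p → Bool,
        (∑ y : Fin p → Bool, if diffCount x y = 0 then d (A (gray p x)) (B (gray p y)) else 0)
        = d (A (gray p x)) (B (gray p x)) := by
      intro x
      rw [show (∑ y : Fin p → Bool, if diffCount x y = 0
            then d (A (gray p x)) (B (gray p y)) else 0)
          = ∑ y : Fin p → Bool, if x = y then d (A (gray p x)) (B (gray p y)) else 0 from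
        Finset.sum_congr rfl fun y _ => if_congr (diffCount_eq_zero x y) rfl rfl]
      rw [Finset.sum_ite_eq]
      simp
    rw [Finset.sum_congr rfl fun x _ => step x]
    exact sum_gray p (fun a => d (A a) (B a))
  rw [cross (fun a => a) (fun a => 2^(p+1)+1-a), cross (fun a => 2^(p+1)+1-a) (fun a => a)]

def Lsum (p : ℕ) : ℕ := ∑ x : Fin p → Bool, ∑ y : Fin p → Bool,
  if diffCount x y = 1 then Nat.dist (gray p x) (gray p y) else 0

lemma Lsum_eq (p : ℕ) : Lsum p + 2^p = 4^p := by
  induction p with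
  | zero => simp [Lsum, diffCount]
  | succ p ih =>
    have hN : (2:ℕ)^(p+1) = 2*2^p := by ring
    have h4 : (4:ℕ)^(p+1) = 4*4^p := by ring
    have hF : (4:ℕ)^p = 2^p * 2^p := by rw [← mul_pow]; norm_num
    have hTT : (∑ x : Fin p → Bool, ∑ y : Fin p → Bool,
        if diffCount x y = 1 then Nat.dist (2^(p+1)+1-gray p x) (2^(p+1)+1-gray p y) else 0)
        = Lsum p := by
      apply Finset.sum_congr rfl; intro x _
      apply Finset.sum_congr rfl; intro y _
      have hx := gray_mem p x; have hy := gray_mem p y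
      congr 1
      simp only [Nat.dist]; omega
    have hc1 : (∑ a ∈ Icc 1 (2^p), Nat.dist (2^(p+1)+1-a) a) = 2^p * 2^p := by
      rw [show (∑ a ∈ Icc 1 (2^p), Nat.dist (2^(p+1)+1-a) a)
          = ∑ a ∈ Icc 1 (2^p), (2*2^p+1-2*a) from Finset.sum_congr rfl fun a ha => by
        simp [mem_Icc] at ha; simp only [Nat.dist]; omega]
      exact sum_lin (2^p)
    have hc2 : (∑ a ∈ Icc 1 (2^p), Nat.dist a (2^(p+1)+1-a)) = 2^p * 2^p := by
      rw [show (∑ a ∈ Icc 1 (2^p), Nat.dist a (2^(p+1)+1-a))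
          = ∑ a ∈ Icc 1 (2^p), (2*2^p+1-2*a) from Finset.sum_congr rfl fun a ha => by
        simp [mem_Icc] at ha; simp only [Nat.dist]; omega]
      exact sum_lin (2^p)
    unfold Lsum
    rw [cube_pair_rec p Nat.dist, hTT, hc1, hc2]
    unfold Lsum at ih
    unfold Lsum
    generalize hB : (2:ℕ)^p * 2^p = B at *
    omega

lemma Wsum_eq (q : ℕ) (hq : 1 ≤ q) :
    (∑ x : Fin (q+1) → Bool, ∑ y : Fin (q+1) → Bool,
      if diffCount x y = 1 then cycDist (2^(q+1)) (gray (q+1) x) (gray (q+1) y) else 0)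
      + 2^(q+1) = 3*4^q := by
  have hN : (2:ℕ)^(q+1) = 2*2^q := by ring
  have hq2 : (2:ℕ)^q = 2*2^(q-1) := by
    nth_rewrite 1 [show q = (q-1)+1 by omega]
    rw [pow_succ]; ring
  have hF : (4:ℕ)^q = 2^q * 2^q := by rw [← mul_pow]; norm_num
  have hTT : (∑ x : Fin q → Bool, ∑ y : Fin q → Bool,
      if diffCount x y = 1 then cycDist (2^(q+1)) (2^(q+1)+1-gray q x) (2^(q+1)+1-gray q y) else 0)
      = Lsum q := by
    apply Finset.sum_congr rfl; intro x _
    apply Finset.sum_congr rfl; intro y _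
    have hx := gray_mem q x; have hy := gray_mem q y
    congr 1
    simp only [cycDist, Nat.dist]; omega
  have hFF : (∑ x : Fin q → Bool, ∑ y : Fin q → Bool,
      if diffCount x y = 1 then cycDist (2^(q+1)) (gray q x) (gray q y) else 0)
      = Lsum q := by
    apply Finset.sum_congr rfl; intro x _
    apply Finset.sum_congr rfl; intro y _
    have hx := gray_mem q x; have hy := gray_mem q y
    congr 1
    simp only [cycDist, Nat.dist]; omega
  have hc1 : (∑ a ∈ Icc 1 (2^q), cycDist (2^(q+1)) (2^(q+1)+1-a) a)
      = 2*(2^(q-1) * 2^(q-1)) := by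
    rw [show (∑ a ∈ Icc 1 (2^q), cycDist (2^(q+1)) (2^(q+1)+1-a) a)
        = ∑ a ∈ Icc 1 (2*2^(q-1)), min (2*(2*2^(q-1))+1-2*a) (2*a-1) from ?_]
    · exact sum_min (2^(q-1))
    · rw [show (2:ℕ)^q = 2*2^(q-1) from hq2]
      apply Finset.sum_congr rfl; intro a ha
      simp only [mem_Icc] at ha
      simp only [cycDist, Nat.dist]; omega
  have hc2 : (∑ a ∈ Icc 1 (2^q), cycDist (2^(q+1)) a (2^(q+1)+1-a))
      = 2*(2^(q-1) * 2^(q-1)) := by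
    rw [show (∑ a ∈ Icc 1 (2^q), cycDist (2^(q+1)) a (2^(q+1)+1-a))
        = ∑ a ∈ Icc 1 (2*2^(q-1)), min (2*(2*2^(q-1))+1-2*a) (2*a-1) from ?_]
    · exact sum_min (2^(q-1))
    · rw [show (2:ℕ)^q = 2*2^(q-1) from hq2]
      apply Finset.sum_congr rfl; intro a ha
      simp only [mem_Icc] at ha
      simp only [cycDist, Nat.dist]; omega
  rw [cube_pair_rec q (cycDist (2^(q+1))), hTT, hFF, hc1, hc2]
  have ih := Lsum_eq q
  have hFh : (4:ℕ)^q = 4*(2^(q-1) * 2^(q-1)) := by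
    rw [hF, hq2]; ring
  generalize hA : (2:ℕ)^(q-1) * 2^(q-1) = A at *
  omega

lemma Wsum_eq' (p : ℕ) (hp : 2 ≤ p) :
    (∑ x : Fin p → Bool, ∑ y : Fin p → Bool,
      if diffCount x y = 1 then cycDist (2^p) (gray p x) (gray p y) else 0)
      + 2^p = 3*4^(p-1) := by
  obtain ⟨q, rfl⟩ : ∃ q, p = q + 1 := ⟨p - 1, by omega⟩
  simpa using Wsum_eq q (by omega)

/-- Sum of edge boundaries of Gray-code preimages of the cuts `ℬ_{ij}` for a cycle factor. -/
theorem stmt15 (k : ℕ) (hk : 1 ≤ k) (n : Fin k → ℕ) (hn : ∀ i, 2 ≤ n i) (i : Fin k) :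
    ∑ j ∈ Finset.Icc 1 (2 ^ (n i - 1)),
        theta (∑ l, n l) (Finset.univ.filter fun v : Fin (∑ l, n l) → Bool =>
          (∀ l, l ≠ i → grayK n v l ∈ Finset.Icc 1 (2 ^ n l)) ∧
            grayK n v i ∈ Finset.Icc j (j + 2 ^ (n i - 1) - 1)) =
      2 ^ ((∑ l, n l) - n i) * (3 * 2 ^ (2 * n i - 3) - 2 ^ (n i - 1)) := by
  have hp2 : 2 ≤ n i := hn i
  have hm1 : 1 ≤ 2 ^ (n i - 1) := Nat.one_le_two_pow
  have h2m : 2 * 2 ^ (n i - 1) = 2 ^ n i := by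
    nth_rewrite 2 [show n i = (n i - 1)+1 by omega]
    rw [pow_succ]; ring
  have htriv : ∀ w : Fin (∑ l, n l) → Bool, ∀ l, l ≠ i →
      grayK n w l ∈ Finset.Icc 1 (2 ^ n l) := by
    intro w l _
    simp only [grayK, Finset.mem_Icc]
    exact gray_mem (n l) (block n w l)
  -- Step 1: LHS as a double sum over pairs of vertices
  have step1 : ∑ j ∈ Finset.Icc 1 (2 ^ (n i - 1)),
      theta (∑ l, n l) (Finset.univ.filter fun v : Fin (∑ l, n l) → Bool =>
        (∀ l, l ≠ i → grayK n v l ∈ Finset.Icc 1 (2 ^ n l)) ∧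
          grayK n v i ∈ Finset.Icc j (j + 2 ^ (n i - 1) - 1))
      = ∑ u : Fin (∑ l, n l) → Bool, ∑ v : Fin (∑ l, n l) → Bool,
          if diffCount u v = 1 then Cc (2 ^ (n i - 1)) (grayK n u i) (grayK n v i) else 0 := by
    unfold theta
    have e1 : ∀ j : ℕ, ((Finset.univ ×ˢ Finset.univ).filter
        fun q : (Fin (∑ l, n l) → Bool) × (Fin (∑ l, n l) → Bool) =>
          q.1 ∈ (Finset.univ.filter fun v => (∀ l, l ≠ i → grayK n v l ∈ Finset.Icc 1 (2 ^ n l)) ∧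
            grayK n v i ∈ Finset.Icc j (j + 2 ^ (n i - 1) - 1)) ∧
          q.2 ∉ (Finset.univ.filter fun v => (∀ l, l ≠ i → grayK n v l ∈ Finset.Icc 1 (2 ^ n l)) ∧
            grayK n v i ∈ Finset.Icc j (j + 2 ^ (n i - 1) - 1)) ∧ cubeAdj q.1 q.2).card
        = ∑ u : Fin (∑ l, n l) → Bool, ∑ v : Fin (∑ l, n l) → Bool,
          if (grayK n u i ∈ Finset.Icc j (j + 2 ^ (n i - 1) - 1) ∧
              grayK n v i ∉ Finset.Icc j (j + 2 ^ (n i - 1) - 1)) ∧ cubeAdj u v then 1 else 0 := by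
      intro j
      rw [Finset.card_filter, Finset.sum_product]
      apply Finset.sum_congr rfl; intro u _
      apply Finset.sum_congr rfl; intro v _
      apply if_congr _ rfl rfl
      simp only [Finset.mem_filter, Finset.mem_univ, true_and]
      constructor
      · rintro ⟨⟨_, h1⟩, h2, h3⟩
        exact ⟨⟨h1, fun hc => h2 ⟨htriv v, hc⟩⟩, h3⟩
      · rintro ⟨⟨h1, h2⟩, h3⟩
        exact ⟨⟨htriv u, h1⟩, fun hc => h2 hc.2, h3⟩
    simp only [e1]
    rw [Finset.sum_comm]
    apply Finset.sum_congr rfl; intro u _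
    rw [Finset.sum_comm]
    apply Finset.sum_congr rfl; intro v _
    by_cases h : cubeAdj u v
    · rw [if_pos (show diffCount u v = 1 from h)]
      have hcf : Cc (2 ^ (n i - 1)) (grayK n u i) (grayK n v i) = ∑ j ∈ Finset.Icc 1 (2 ^ (n i - 1)),
          if grayK n u i ∈ Finset.Icc j (j + 2 ^ (n i - 1) - 1) ∧ grayK n v i ∉ Finset.Icc j (j + 2 ^ (n i - 1) - 1)
          then 1 else 0 := Finset.card_filter _ _
      rw [hcf]
      apply Finset.sum_congr rfl; intro j _
      apply if_congr _ rfl rfl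
      simp [h]
    · rw [if_neg (show ¬ diffCount u v = 1 from h)]
      apply Finset.sum_eq_zero; intro j _
      simp [h]
  -- Step 2: transport to the product of blocks
  have step2 : (∑ u : Fin (∑ l, n l) → Bool, ∑ v : Fin (∑ l, n l) → Bool,
      if diffCount u v = 1 then Cc (2 ^ (n i - 1)) (grayK n u i) (grayK n v i) else 0)
      = ∑ U : (∀ l, Fin (n l) → Bool), ∑ V : (∀ l, Fin (n l) → Bool),
          if (∑ l, diffCount (U l) (V l)) = 1
          then Cc (2 ^ (n i - 1)) (gray (n i) (U i)) (gray (n i) (V i)) else 0 := by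
    have inner : ∀ u : Fin (∑ l, n l) → Bool,
        (∑ v : Fin (∑ l, n l) → Bool,
          if diffCount u v = 1 then Cc (2 ^ (n i - 1)) (grayK n u i) (grayK n v i) else 0)
        = ∑ V : (∀ l, Fin (n l) → Bool), if (∑ l, diffCount (split n u l) (V l)) = 1
            then Cc (2 ^ (n i - 1)) (gray (n i) (split n u i)) (gray (n i) (V i)) else 0 := by
      intro u
      apply Fintype.sum_bijective (split n) (split_bij n)
      intro v
      exact if_congr (iff_of_eq (congrArg (· = 1) (diffCount_split n u v))) rfl rfl
    rw [Finset.sum_congr rfl fun u _ => inner u]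
    apply Fintype.sum_bijective (split n) (split_bij n)
    intro u
    rfl
  rw [step1, step2]
  -- Step 3: doubling; prepare the symmetrized identity
  apply Nat.eq_of_mul_eq_mul_left (show 0 < 2 by norm_num)
  have hswap : (∑ U : (∀ l, Fin (n l) → Bool), ∑ V : (∀ l, Fin (n l) → Bool),
      if (∑ l, diffCount (U l) (V l)) = 1
      then Cc (2 ^ (n i - 1)) (gray (n i) (U i)) (gray (n i) (V i)) else 0)
      = ∑ U : (∀ l, Fin (n l) → Bool), ∑ V : (∀ l, Fin (n l) → Bool),
      if (∑ l, diffCount (V l) (U l)) = 1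
      then Cc (2 ^ (n i - 1)) (gray (n i) (V i)) (gray (n i) (U i)) else 0 := by
    rw [Finset.sum_comm]
  have h2T : 2 * (∑ U : (∀ l, Fin (n l) → Bool), ∑ V : (∀ l, Fin (n l) → Bool),
      if (∑ l, diffCount (U l) (V l)) = 1
      then Cc (2 ^ (n i - 1)) (gray (n i) (U i)) (gray (n i) (V i)) else 0)
      = ∑ U : (∀ l, Fin (n l) → Bool), ∑ V : (∀ l, Fin (n l) → Bool),
          if (∑ l, diffCount (U l) (V l)) = 1
          then cycDist (2 ^ n i) (gray (n i) (U i)) (gray (n i) (V i)) else 0 := by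
    rw [two_mul]
    nth_rewrite 2 [hswap]
    rw [← Finset.sum_add_distrib]
    apply Finset.sum_congr rfl; intro U _
    rw [← Finset.sum_add_distrib]
    apply Finset.sum_congr rfl; intro V _
    have hsym : (∑ l, diffCount (V l) (U l)) = ∑ l, diffCount (U l) (V l) :=
      Finset.sum_congr rfl fun l _ => diffCount_comm _ _
    rw [hsym]
    by_cases hc : (∑ l, diffCount (U l) (V l)) = 1
    · rw [if_pos hc, if_pos hc, if_pos hc]
      obtain ⟨ha1, ha2⟩ := gray_mem (n i) (U i)
      obtain ⟨hb1, hb2⟩ := gray_mem (n i) (V i)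
      rw [← h2m]
      clear htriv step1 step2 hswap hsym hc
      exact Cc_add_Cc (2 ^ (n i - 1)) (gray (n i) (U i)) (gray (n i) (V i)) hm1 ha1
        (by omega) hb1 (by omega)
    · rw [if_neg hc, if_neg hc, if_neg hc]
  rw [h2T]
  -- Step 4: split the product at coordinate i
  have he1 : ∀ (x : Fin (n i) → Bool) (R : ∀ l : {j : Fin k // j ≠ i}, Fin (n ↑l) → Bool),
      (Equiv.piSplitAt i (fun l => Fin (n l) → Bool)).symm (x, R) i = x := by
    intro x R; simp
  have he2 : ∀ (x : Fin (n i) → Bool) (R : ∀ l : {j : Fin k // j ≠ i}, Fin (n ↑l) → Bool)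
      (l : Fin k) (hl : l ≠ i),
      (Equiv.piSplitAt i (fun l => Fin (n l) → Bool)).symm (x, R) l = R ⟨l, hl⟩ := by
    intro x R l hl; simp [hl]
  have hdiffsplit : ∀ (x y : Fin (n i) → Bool)
      (R S : ∀ l : {j : Fin k // j ≠ i}, Fin (n ↑l) → Bool),
      (∑ l, diffCount ((Equiv.piSplitAt i (fun l => Fin (n l) → Bool)).symm (x, R) l)
        ((Equiv.piSplitAt i (fun l => Fin (n l) → Bool)).symm (y, S) l))
      = diffCount x y + ∑ l : {j : Fin k // j ≠ i}, diffCount (R l) (S l) := by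
    intro x y R S
    rw [← Finset.add_sum_erase Finset.univ
      (fun l => diffCount ((Equiv.piSplitAt i (fun l => Fin (n l) → Bool)).symm (x, R) l)
        ((Equiv.piSplitAt i (fun l => Fin (n l) → Bool)).symm (y, S) l))
      (Finset.mem_univ i)]
    congr 1
    · rw [he1, he1]
    · rw [Finset.sum_subtype (p := fun l => l ≠ i) (Finset.univ.erase i)
        (fun l => by simp)
        (fun l => diffCount ((Equiv.piSplitAt i (fun l => Fin (n l) → Bool)).symm (x, R) l)
          ((Equiv.piSplitAt i (fun l => Fin (n l) → Bool)).symm (y, S) l))]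
      apply Finset.sum_congr rfl
      rintro ⟨l, hl⟩ _
      rw [he2 _ _ _ hl, he2 _ _ _ hl]
  have hcard : Fintype.card (∀ l : {j : Fin k // j ≠ i}, Fin (n ↑l) → Bool)
      = 2 ^ ((∑ l, n l) - n i) := by
    rw [Fintype.card_pi]
    have hcf : ∀ l : {j : Fin k // j ≠ i}, Fintype.card (Fin (n ↑l) → Bool) = 2 ^ (n ↑l) :=
      fun l => by simp
    rw [Finset.prod_congr rfl fun (l : {j : Fin k // j ≠ i}) _ => hcf l]
    rw [Finset.prod_pow_eq_pow_sum]
    congr 1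
    have hs : ∑ l : {j : Fin k // j ≠ i}, n ↑l = ∑ l ∈ Finset.univ.erase i, n l :=
      (Finset.sum_subtype (p := fun l => l ≠ i) (Finset.univ.erase i)
        (fun l => by simp) n).symm
    have hins := Finset.add_sum_erase Finset.univ n (Finset.mem_univ i)
    clear htriv step1 step2 hswap h2T
    omega
  have hinner : ∀ (x y : Fin (n i) → Bool),
      (∑ R : (∀ l : {j : Fin k // j ≠ i}, Fin (n ↑l) → Bool),
        ∑ S : (∀ l : {j : Fin k // j ≠ i}, Fin (n ↑l) → Bool),
          if diffCount x y + (∑ l : {j : Fin k // j ≠ i}, diffCount (R l) (S l)) = 1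
          then cycDist (2 ^ n i) (gray (n i) x) (gray (n i) y) else 0)
      = (if diffCount x y = 1 then cycDist (2 ^ n i) (gray (n i) x) (gray (n i) y) else 0)
          * 2 ^ ((∑ l, n l) - n i) := by
    intro x y
    by_cases h0 : diffCount x y = 0
    · have hxy : x = y := (diffCount_eq_zero x y).1 h0
      have hc0 : cycDist (2 ^ n i) (gray (n i) x) (gray (n i) y) = 0 := by
        rw [hxy]; simp [cycDist, Nat.dist]
      simp [hc0, h0]
    · by_cases h1 : diffCount x y = 1
      · have hcond : ∀ (R S : ∀ l : {j : Fin k // j ≠ i}, Fin (n ↑l) → Bool),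
            (diffCount x y + (∑ l : {j : Fin k // j ≠ i}, diffCount (R l) (S l)) = 1) ↔ R = S := by
          intro R S
          rw [h1]
          constructor
          · intro h
            have hz : (∑ l : {j : Fin k // j ≠ i}, diffCount (R l) (S l)) = 0 :=
              Nat.add_left_cancel (h.trans (Nat.add_zero 1).symm)
            rw [Finset.sum_eq_zero_iff] at hz
            funext l
            exact (diffCount_eq_zero _ _).1 (hz l (Finset.mem_univ l))
          · rintro rfl
            simp [Finset.sum_eq_zero fun (l : {j : Fin k // j ≠ i}) (_ : l ∈ Finset.univ) =>
              (diffCount_eq_zero (R l) (R l)).2 rfl]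
        rw [Finset.sum_congr rfl fun R _ => Finset.sum_congr rfl fun S _ =>
          if_congr (hcond R S) rfl rfl]
        rw [Finset.sum_congr rfl fun R _ => Finset.sum_ite_eq Finset.univ R
          (fun _ => cycDist (2 ^ n i) (gray (n i) x) (gray (n i) y))]
        simp only [Finset.mem_univ, if_true, Finset.sum_const, Finset.card_univ, hcard,
          smul_eq_mul, h1]
        rw [mul_comm]
      · have hne : ∀ (D : ℕ), ¬ (diffCount x y + D = 1) := by
          intro D; clear htriv step1 step2 hswap h2T; omega
        simp [hne, h1]
  -- reindex the double sum over the product type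
  have step4 : (∑ U : (∀ l, Fin (n l) → Bool), ∑ V : (∀ l, Fin (n l) → Bool),
      if (∑ l, diffCount (U l) (V l)) = 1
      then cycDist (2 ^ n i) (gray (n i) (U i)) (gray (n i) (V i)) else 0)
      = (∑ x : Fin (n i) → Bool, ∑ y : Fin (n i) → Bool,
          if diffCount x y = 1 then cycDist (2 ^ n i) (gray (n i) x) (gray (n i) y) else 0)
          * 2 ^ ((∑ l, n l) - n i) := by
    have hU : ∀ F : (∀ l, Fin (n l) → Bool) → ℕ,
        (∑ U : (∀ l, Fin (n l) → Bool), F U)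
        = ∑ x : Fin (n i) → Bool, ∑ R : (∀ l : {j : Fin k // j ≠ i}, Fin (n ↑l) → Bool),
            F ((Equiv.piSplitAt i (fun l => Fin (n l) → Bool)).symm (x, R)) := by
      intro F
      rw [← Equiv.sum_comp (Equiv.piSplitAt i (fun l => Fin (n l) → Bool)).symm F,
        Fintype.sum_prod_type]
    rw [hU (fun U => ∑ V : (∀ l, Fin (n l) → Bool),
      if (∑ l, diffCount (U l) (V l)) = 1
      then cycDist (2 ^ n i) (gray (n i) (U i)) (gray (n i) (V i)) else 0)]
    rw [Finset.sum_congr rfl fun (x : Fin (n i) → Bool) _ =>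
      Finset.sum_congr rfl fun (R : ∀ l : {j : Fin k // j ≠ i}, Fin (n ↑l) → Bool) _ =>
      hU (fun V => if (∑ l, diffCount
          ((Equiv.piSplitAt i (fun l => Fin (n l) → Bool)).symm (x, R) l) (V l)) = 1
        then cycDist (2 ^ n i)
          (gray (n i) ((Equiv.piSplitAt i (fun l => Fin (n l) → Bool)).symm (x, R) i))
          (gray (n i) (V i)) else 0)]
    have hre : ∀ x : Fin (n i) → Bool,
        (∑ R : (∀ l : {j : Fin k // j ≠ i}, Fin (n ↑l) → Bool),
          ∑ y : Fin (n i) → Bool,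
            ∑ S : (∀ l : {j : Fin k // j ≠ i}, Fin (n ↑l) → Bool),
            if (∑ l, diffCount ((Equiv.piSplitAt i (fun l => Fin (n l) → Bool)).symm (x, R) l)
                ((Equiv.piSplitAt i (fun l => Fin (n l) → Bool)).symm (y, S) l)) = 1
            then cycDist (2 ^ n i)
              (gray (n i) ((Equiv.piSplitAt i (fun l => Fin (n l) → Bool)).symm (x, R) i))
              (gray (n i) ((Equiv.piSplitAt i (fun l => Fin (n l) → Bool)).symm (y, S) i)) else 0)
        = ∑ y : Fin (n i) → Bool,
            (if diffCount x y = 1 then cycDist (2 ^ n i) (gray (n i) x) (gray (n i) y) else 0)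
            * 2 ^ ((∑ l, n l) - n i) := by
      intro x
      rw [Finset.sum_comm]
      apply Finset.sum_congr rfl; intro y _
      rw [← hinner x y]
      apply Finset.sum_congr rfl; intro R _
      apply Finset.sum_congr rfl; intro S _
      rw [hdiffsplit, he1, he1]
    rw [Finset.sum_congr rfl fun x _ => hre x]
    rw [Finset.sum_congr rfl fun (x : Fin (n i) → Bool) _ =>
      (Finset.sum_mul Finset.univ (fun y => if diffCount x y = 1
        then cycDist (2 ^ n i) (gray (n i) x) (gray (n i) y) else 0)
        (2 ^ ((∑ l, n l) - n i))).symm]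
    rw [← Finset.sum_mul]
  rw [step4]
  clear htriv step1 step2 hswap h2T hinner hdiffsplit he1 he2 step4 hcard
  -- Step 5: final arithmetic
  have W := Wsum_eq' (n i) hp2
  have h4B : (4:ℕ) ^ (n i - 1) = 2 * 2 ^ (2 * n i - 3) := by
    rw [show (4:ℕ) = 2^2 by norm_num, ← pow_mul, show 2*(n i -1) = (2 * n i - 3)+1 by omega,
      pow_succ]
    ring
  have hBm : 2 ^ (n i - 1) ≤ 3 * 2 ^ (2 * n i - 3) := by
    have := Nat.pow_le_pow_right (show 1 ≤ 2 by norm_num) (show n i - 1 ≤ 2 * n i - 3 by omega)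
    omega
  generalize hG : (∑ x : Fin (n i) → Bool, ∑ y : Fin (n i) → Bool,
      if diffCount x y = 1 then cycDist (2 ^ n i) (gray (n i) x) (gray (n i) y) else 0)
      = X at W ⊢
  have hX : X = 2 * (3 * 2 ^ (2 * n i - 3) - 2 ^ (n i - 1)) := by omega
  rw [hX]
  ring
end

section
/- Let k ≥ 1, n₁,...,n_k ≥ 2, n = Σ n_i, and fix i with 1 ≤ i ≤ k. If 𝒢_i is the path P_{2^{n_i}}, then Σ_{j=1}^{2^{n_i}−1} θ(n, ξ_{n₁...n_k}^{-1}(ℬ_{ij})) = 2^{n−n_i}(2^{2n_i−1} − 2^{n_i−1}), where ℬ_{ij} = N_{2^{n₁}} × ⋯ × N_j × ⋯ × N_{2^{n_k}} with the initial segment N_j = {1,...,j} in the i-th coordinate and the full set in every other coordinate. -/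
open Finset

/-! ### Auxiliary lemmas -/

lemma gray_bounds : ∀ (m : ℕ) (v : Fin m → Bool), 1 ≤ gray m v ∧ gray m v ≤ 2 ^ m := by
  intro m
  induction m with
  | zero => intro v; simp [gray]
  | succ m ih =>
    intro v
    have h := ih (fun i => v i.succ)
    have hp : (1:ℕ) ≤ 2 ^ m := Nat.one_le_two_pow
    rw [gray]
    rcases Bool.eq_false_or_eq_true (v 0) with h0 | h0 <;>
      simp [h0, pow_succ] <;> omega

def consBoolEquiv (m : ℕ) : Bool × (Fin m → Bool) ≃ (Fin (m+1) → Bool) :=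
  Fin.consEquiv (fun _ => Bool)

lemma sumCons {M : Type*} [AddCommMonoid M] (m : ℕ) (f : (Fin (m+1) → Bool) → M) :
    ∑ v : Fin (m+1) → Bool, f v
      = ∑ a : Fin m → Bool, (f (Fin.cons false a) + f (Fin.cons true a)) := by
  rw [← Equiv.sum_comp (consBoolEquiv m) f, Fintype.sum_prod_type, Fintype.sum_bool]
  rw [← Finset.sum_add_distrib]
  apply Finset.sum_congr rfl
  intro a _
  rw [add_comm]
  rfl

lemma gray_cons_false (m : ℕ) (a : Fin m → Bool) :
    gray (m+1) (Fin.cons false a) = gray m a := by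
  simp [gray]

lemma gray_cons_true (m : ℕ) (a : Fin m → Bool) :
    gray (m+1) (Fin.cons true a) = 2 ^ (m+1) + 1 - gray m a := by
  simp [gray]

lemma twoSg : ∀ m : ℕ, 2 * (∑ v : Fin m → Bool, gray m v) = 2 ^ m * (2 ^ m + 1) := by
  intro m
  match m with
  | 0 => simp [gray]
  | m + 1 =>
    rw [sumCons]
    have : ∀ a : Fin m → Bool,
        gray (m+1) (Fin.cons false a) + gray (m+1) (Fin.cons true a) = 2 ^ (m+1) + 1 := by
      intro a
      have h := gray_bounds m a
      have hp : (2:ℕ) ^ m ≤ 2 ^ (m+1) := Nat.pow_le_pow_right (by norm_num) (by omega)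
      rw [gray_cons_false, gray_cons_true]; omega
    rw [Finset.sum_congr rfl (fun a _ => this a), Finset.sum_const, Finset.card_univ]
    simp [pow_succ]
    ring

def bflip {N : ℕ} (c : Fin N) (v : Fin N → Bool) : Fin N → Bool :=
  Function.update v c (!(v c))

lemma bflip_apply {N : ℕ} (c j : Fin N) (v : Fin N → Bool) :
    bflip c v j = if j = c then !(v c) else v j := Function.update_apply v c _ j

lemma bflip_invol {N : ℕ} (c : Fin N) (v : Fin N → Bool) : bflip c (bflip c v) = v := by
  funext j
  by_cases h : j = c <;> simp [bflip_apply, h]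

lemma flip_cons_zero (m : ℕ) (b : Bool) (a : Fin m → Bool) :
    bflip 0 (Fin.cons b a) = Fin.cons (!b) a := by
  funext j
  refine Fin.cases ?_ ?_ j
  · simp [bflip]
  · intro s
    simp [bflip, Function.update_apply, Fin.succ_ne_zero]

lemma flip_cons_succ (m : ℕ) (b : Bool) (a : Fin m → Bool) (s : Fin m) :
    bflip s.succ (Fin.cons b a) = Fin.cons b (bflip s a) := by
  funext j
  refine Fin.cases ?_ ?_ j
  · simp [bflip, Function.update_apply, (Fin.succ_ne_zero s).symm]
  · intro t
    by_cases h : t = s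
    · subst h; simp [bflip]
    · simp [bflip, Function.update_apply, h, Fin.succ_inj.ne.mpr h]

def W (m : ℕ) : ℕ :=
  ∑ a : Fin m → Bool, ∑ t : Fin m, Nat.dist (gray m a) (gray m (bflip t a))

lemma W_eq : ∀ m : ℕ, W m = 2 ^ (2 * m) - 2 ^ m := by
  intro m
  induction m with
  | zero => simp [W]
  | succ m ih =>
    have hP : (1:ℕ) ≤ 2 ^ m := Nat.one_le_two_pow
    have e1 : (2:ℕ) ^ (m+1) = 2 * 2 ^ m := by rw [pow_succ]; ring
    have e2 : (2:ℕ) ^ (2*m) = 2 ^ m * 2 ^ m := by rw [two_mul, pow_add]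
    have e3 : (2:ℕ) ^ (2*(m+1)) = 4 * (2 ^ m * 2 ^ m) := by
      have : 2*(m+1) = 2*m + 2 := by ring
      rw [this, pow_add, e2]; ring
    have key : ∀ a : Fin m → Bool,
        (∑ t : Fin (m+1), Nat.dist (gray (m+1) (Fin.cons false a))
            (gray (m+1) (bflip t (Fin.cons false a))))
        + (∑ t : Fin (m+1), Nat.dist (gray (m+1) (Fin.cons true a))
            (gray (m+1) (bflip t (Fin.cons true a))))
        = 2 * (2 ^ (m+1) + 1 - 2 * gray m a)
          + 2 * ∑ s : Fin m, Nat.dist (gray m a) (gray m (bflip s a)) := by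
      intro a
      rw [Fin.sum_univ_succ, Fin.sum_univ_succ]
      have hga := gray_bounds m a
      have h0f : Nat.dist (gray (m+1) (Fin.cons false a))
          (gray (m+1) (bflip 0 (Fin.cons false a))) = 2 ^ (m+1) + 1 - 2 * gray m a := by
        rw [flip_cons_zero]
        simp only [Bool.not_false, gray_cons_false, gray_cons_true]
        rw [Nat.dist]; omega
      have h0t : Nat.dist (gray (m+1) (Fin.cons true a))
          (gray (m+1) (bflip 0 (Fin.cons true a))) = 2 ^ (m+1) + 1 - 2 * gray m a := by
        rw [flip_cons_zero]
        simp only [Bool.not_true, gray_cons_false, gray_cons_true]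
        rw [Nat.dist]; omega
      have hsf : ∀ s : Fin m, Nat.dist (gray (m+1) (Fin.cons false a))
          (gray (m+1) (bflip s.succ (Fin.cons false a)))
          = Nat.dist (gray m a) (gray m (bflip s a)) := by
        intro s
        rw [flip_cons_succ, gray_cons_false, gray_cons_false]
      have hst : ∀ s : Fin m, Nat.dist (gray (m+1) (Fin.cons true a))
          (gray (m+1) (bflip s.succ (Fin.cons true a)))
          = Nat.dist (gray m a) (gray m (bflip s a)) := by
        intro s
        have hgb := gray_bounds m (bflip s a)
        rw [flip_cons_succ, gray_cons_true, gray_cons_true, Nat.dist, Nat.dist]; omega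
      rw [h0f, h0t, Finset.sum_congr rfl (fun s _ => hsf s),
        Finset.sum_congr rfl (fun s _ => hst s)]
      ring
    have hW : W (m+1) = 2 * (∑ a : Fin m → Bool, (2 ^ (m+1) + 1 - 2 * gray m a)) + 2 * W m := by
      rw [W, sumCons]
      rw [Finset.sum_congr rfl (fun a _ => key a)]
      rw [Finset.sum_add_distrib, ← Finset.mul_sum, ← Finset.mul_sum]
      rfl
    have hsub : (∑ a : Fin m → Bool, (2 ^ (m+1) + 1 - 2 * gray m a)) = 2 ^ m * 2 ^ m := by
      have h1 : (∑ a : Fin m → Bool, (2 ^ (m+1) + 1 - 2 * gray m a))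
          + 2 * (∑ a : Fin m → Bool, gray m a) = 2 ^ m * (2 ^ (m+1) + 1) := by
        rw [Finset.mul_sum, ← Finset.sum_add_distrib]
        have : ∀ a : Fin m → Bool, (2 ^ (m+1) + 1 - 2 * gray m a) + 2 * gray m a
            = 2 ^ (m+1) + 1 := by
          intro a
          have := gray_bounds m a
          omega
        rw [Finset.sum_congr rfl (fun a _ => this a), Finset.sum_const, Finset.card_univ]
        simp [mul_comm]
      have h2 := twoSg m
      have h3 : 2 ^ m * (2 ^ (m+1) + 1) = 2 * (2 ^ m * 2 ^ m) + 2 ^ m := by rw [e1]; ring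
      have h4 : 2 ^ m * (2 ^ m + 1) = 2 ^ m * 2 ^ m + 2 ^ m := by ring
      omega
    have h5 : 2 ^ m ≤ 2 ^ m * 2 ^ m := Nat.le_mul_of_pos_left _ (by omega)
    rw [hW, hsub, ih, e3, e1, e2]
    omega

lemma cubeAdj_bflip {N : ℕ} (c : Fin N) (v : Fin N → Bool) : cubeAdj (bflip c v) v := by
  have : (Finset.univ.filter fun j => bflip c v j ≠ v j) = {c} := by
    ext j
    by_cases h : j = c <;> simp [bflip_apply, h]
  rw [cubeAdj, diffCount, this, Finset.card_singleton]

lemma bflip_inj {N : ℕ} (v : Fin N → Bool) {c c' : Fin N}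
    (h : bflip c v = bflip c' v) : c = c' := by
  by_contra hne
  have h1 := congrFun h c
  rw [bflip_apply, bflip_apply, if_pos rfl, if_neg hne] at h1
  exact Bool.not_ne_self (v c) h1

lemma cubeAdj_exists {N : ℕ} {u v : Fin N → Bool} (h : cubeAdj u v) :
    ∃ c, u = bflip c v := by
  rw [cubeAdj, diffCount, Finset.card_eq_one] at h
  obtain ⟨c, hc⟩ := h
  refine ⟨c, funext fun j => ?_⟩
  by_cases hj : j = c
  · subst hj
    have : u j ≠ v j := by
      have := Finset.mem_singleton_self j
      rw [← hc, Finset.mem_filter] at this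
      exact this.2
    rw [bflip_apply]
    simp only [if_pos rfl]
    revert this
    cases u j <;> cases v j <;> simp
  · have : j ∉ ({c} : Finset (Fin N)) := by simp [hj]
    rw [← hc, Finset.mem_filter] at this
    push_neg at this
    rw [bflip_apply, if_neg hj]
    exact this (Finset.mem_univ j)

lemma sum_adj {N : ℕ} (v : Fin N → Bool) (f : (Fin N → Bool) → ℕ) :
    ∑ u : Fin N → Bool, (if cubeAdj u v then f u else 0) = ∑ c : Fin N, f (bflip c v) := by
  rw [← Finset.sum_filter]
  refine (Finset.sum_bij (fun c _ => bflip c v) ?_ ?_ ?_ ?_).symm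
  · intro c _; simp [cubeAdj_bflip]
  · intro c _ c' _ h; exact bflip_inj v h
  · intro u hu
    rw [Finset.mem_filter] at hu
    obtain ⟨c, rfl⟩ := cubeAdj_exists hu.2
    exact ⟨c, Finset.mem_univ c, rfl⟩
  · intro c _; rfl

lemma sum_comp_injective {N m : ℕ} (ι : Fin m → Fin N) (hι : Function.Injective ι)
    (H : (Fin m → Bool) → ℕ) :
    ∑ v : Fin N → Bool, H (v ∘ ι) = 2 ^ (N - m) * ∑ a : Fin m → Bool, H a := by
  classical
  set p : Fin N → Prop := fun c => ∃ t, ι t = c with hp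
  set φ : ({x // p x} → Bool) → (Fin m → Bool) :=
    fun f => fun t => f ⟨ι t, ⟨t, rfl⟩⟩ with hφdef
  have hφ : Function.Bijective φ := by
    constructor
    · intro f f' hf
      funext x
      obtain ⟨x, t, rfl⟩ := x
      exact congrFun hf t
    · intro a
      refine ⟨fun x => a x.2.choose, funext fun t => ?_⟩
      have hspec : ι (((⟨t, rfl⟩ : ∃ s, ι s = ι t)).choose) = ι t :=
        (⟨t, rfl⟩ : ∃ s, ι s = ι t).choose_spec
      exact congrArg a (hι hspec)
  have hcardp : Fintype.card {x // p x} = m := by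
    rw [Fintype.card_subtype]
    have : Finset.filter p Finset.univ = Finset.image ι Finset.univ := by
      ext x
      simp [hp, eq_comm]
    rw [this, Finset.card_image_of_injective _ hι, Finset.card_univ, Fintype.card_fin]
  have hcardnp : Fintype.card {x // ¬ p x} = N - m := by
    rw [Fintype.card_subtype_compl, hcardp, Fintype.card_fin]
  rw [← Equiv.sum_comp (Equiv.piEquivPiSubtypeProd p (fun _ => Bool)).symm
    (fun v => H (v ∘ ι)), Fintype.sum_prod_type]
  have key : ∀ (f : {x // p x} → Bool) (g : {x // ¬ p x} → Bool),
      ((Equiv.piEquivPiSubtypeProd p (fun _ => Bool)).symm (f, g)) ∘ ι = φ f := by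
    intro f g
    funext t
    show (Equiv.piEquivPiSubtypeProd p (fun _ => Bool)).symm (f, g) (ι t) = _
    rw [Equiv.piEquivPiSubtypeProd_symm_apply]
    exact dif_pos ⟨t, rfl⟩
  calc ∑ f : {x // p x} → Bool, ∑ g : {x // ¬ p x} → Bool,
        H (((Equiv.piEquivPiSubtypeProd p (fun _ => Bool)).symm (f, g)) ∘ ι)
      = ∑ f : {x // p x} → Bool, ∑ _g : {x // ¬ p x} → Bool, H (φ f) := by
        exact Finset.sum_congr rfl fun f _ => Finset.sum_congr rfl fun g _ => by rw [key f g]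
    _ = ∑ f : {x // p x} → Bool, (Fintype.card ({x // ¬ p x} → Bool)) * H (φ f) := by
        simp [Finset.sum_const, Finset.card_univ, mul_comm]
    _ = (Fintype.card ({x // ¬ p x} → Bool)) * ∑ f : {x // p x} → Bool, H (φ f) := by
        rw [← Finset.mul_sum]
    _ = 2 ^ (N - m) * ∑ a : Fin m → Bool, H a := by
        rw [Fintype.card_fun, Fintype.card_bool, hcardnp,
          Fintype.sum_bijective φ hφ _ _ (fun f => rfl)]

lemma blockPos_injective {k : ℕ} (n : Fin k → ℕ) (i : Fin k) :
    Function.Injective (blockPos n i) := by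
  intro t t' h
  have h1 := congrArg Fin.val h
  simp only [blockPos] at h1
  exact Fin.ext (by omega)

lemma block_bflip_eq {k : ℕ} (n : Fin k → ℕ) (i : Fin k) (t : Fin (n i))
    (v : Fin (∑ j, n j) → Bool) :
    block n (bflip (blockPos n i t) v) i = bflip t (block n v i) := by
  funext s
  show bflip (blockPos n i t) v (blockPos n i s) = _
  rw [bflip_apply, bflip_apply]
  by_cases h : s = t
  · subst h
    rw [if_pos rfl, if_pos rfl]
    rfl
  · rw [if_neg h, if_neg (fun hc => h (blockPos_injective n i hc))]
    rfl

lemma block_bflip_ne {k : ℕ} (n : Fin k → ℕ) (i : Fin k) (c : Fin (∑ j, n j))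
    (hc : ∀ t, blockPos n i t ≠ c) (v : Fin (∑ j, n j) → Bool) :
    block n (bflip c v) i = block n v i := by
  funext s
  show bflip c v (blockPos n i s) = v (blockPos n i s)
  rw [bflip_apply, if_neg (hc s)]

/-- Sum of edge boundaries of Gray-code preimages of the cuts `ℬ_{ij}` for a path factor. -/
theorem stmt16 (k : ℕ) (hk : 1 ≤ k) (n : Fin k → ℕ) (hn : ∀ i, 2 ≤ n i) (i : Fin k) :
    ∑ j ∈ Finset.Icc 1 (2 ^ n i - 1),
        theta (∑ l, n l) (Finset.univ.filter fun v : Fin (∑ l, n l) → Bool =>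
          (∀ l, l ≠ i → grayK n v l ∈ Finset.Icc 1 (2 ^ n l)) ∧
            grayK n v i ∈ Finset.Icc 1 j) =
      2 ^ ((∑ l, n l) - n i) * (2 ^ (2 * n i - 1) - 2 ^ (n i - 1)) := by
  classical
  set g : (Fin (∑ l, n l) → Bool) → ℕ := fun v => gray (n i) (block n v i) with hg
  have hmn : n i ≤ ∑ l, n l :=
    Finset.single_le_sum (f := n) (fun _ _ => Nat.zero_le _) (Finset.mem_univ i)
  have hgb : ∀ v, 1 ≤ g v ∧ g v ≤ 2 ^ n i := fun v => gray_bounds (n i) (block n v i)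
  have hmem : ∀ (j : ℕ) (v : Fin (∑ l, n l) → Bool),
      ((∀ l, l ≠ i → grayK n v l ∈ Finset.Icc 1 (2 ^ n l)) ∧
        grayK n v i ∈ Finset.Icc 1 j) ↔ g v ≤ j := by
    intro j v
    constructor
    · intro h
      exact (Finset.mem_Icc.mp h.2).2
    · intro h
      exact ⟨fun l _ => Finset.mem_Icc.mpr
          ⟨(gray_bounds (n l) (block n v l)).1, (gray_bounds (n l) (block n v l)).2⟩,
        Finset.mem_Icc.mpr ⟨(hgb v).1, h⟩⟩
  have htheta : ∀ j : ℕ,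
      theta (∑ l, n l) (Finset.univ.filter fun v : Fin (∑ l, n l) → Bool =>
          (∀ l, l ≠ i → grayK n v l ∈ Finset.Icc 1 (2 ^ n l)) ∧
            grayK n v i ∈ Finset.Icc 1 j)
        = ∑ u : Fin (∑ l, n l) → Bool, ∑ v : Fin (∑ l, n l) → Bool,
            (if g u ≤ j ∧ ¬ (g v ≤ j) ∧ cubeAdj u v then 1 else 0) := by
    intro j
    rw [theta, Finset.card_filter, Finset.sum_product]
    refine Finset.sum_congr rfl fun u _ => Finset.sum_congr rfl fun v _ => ?_
    refine if_congr ?_ rfl rfl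
    simp only [Finset.mem_filter, Finset.mem_univ, true_and]
    rw [hmem j u, hmem j v]
  have hinner : ∀ u v : Fin (∑ l, n l) → Bool,
      (∑ j ∈ Finset.Icc 1 (2 ^ n i - 1),
          if g u ≤ j ∧ ¬ (g v ≤ j) ∧ cubeAdj u v then 1 else 0)
        = if cubeAdj u v then g v - g u else 0 := by
    intro u v
    by_cases hadj : cubeAdj u v
    · rw [if_pos hadj, ← Finset.card_filter]
      have hb1 := hgb u
      have hb2 := hgb v
      have hpow : (1:ℕ) ≤ 2 ^ n i := Nat.one_le_two_pow
      have hfe : Finset.filter (fun j => g u ≤ j ∧ ¬ (g v ≤ j) ∧ cubeAdj u v)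
          (Finset.Icc 1 (2 ^ n i - 1)) = Finset.Ico (g u) (g v) := by
        ext j
        simp only [Finset.mem_filter, Finset.mem_Icc, Finset.mem_Ico, hadj, and_true]
        omega
      rw [hfe, Nat.card_Ico]
    · rw [if_neg hadj]
      refine Finset.sum_eq_zero fun j _ => ?_
      rw [if_neg (by tauto)]
  have step1 : (∑ j ∈ Finset.Icc 1 (2 ^ n i - 1),
        theta (∑ l, n l) (Finset.univ.filter fun v : Fin (∑ l, n l) → Bool =>
          (∀ l, l ≠ i → grayK n v l ∈ Finset.Icc 1 (2 ^ n l)) ∧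
            grayK n v i ∈ Finset.Icc 1 j))
      = ∑ v : Fin (∑ l, n l) → Bool, ∑ c : Fin (∑ l, n l),
          (g v - g (bflip c v)) := by
    rw [Finset.sum_congr rfl (fun j _ => htheta j), Finset.sum_comm]
    have hu : ∀ u : Fin (∑ l, n l) → Bool,
        (∑ j ∈ Finset.Icc 1 (2 ^ n i - 1), ∑ v : Fin (∑ l, n l) → Bool,
            (if g u ≤ j ∧ ¬ (g v ≤ j) ∧ cubeAdj u v then 1 else 0))
          = ∑ v : Fin (∑ l, n l) → Bool, (if cubeAdj u v then g v - g u else 0) := by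
      intro u
      rw [Finset.sum_comm]
      exact Finset.sum_congr rfl fun v _ => hinner u v
    rw [Finset.sum_congr rfl (fun u _ => hu u), Finset.sum_comm]
    exact Finset.sum_congr rfl fun v _ => sum_adj v (fun u => g v - g u)
  have hA2 : ∀ c : Fin (∑ l, n l),
      (∑ v : Fin (∑ l, n l) → Bool, (g v - g (bflip c v)))
        = ∑ v : Fin (∑ l, n l) → Bool, (g (bflip c v) - g v) :=
    fun c => Fintype.sum_bijective (bflip c) (Function.Involutive.bijective (bflip_invol c))
      _ _ (fun v => by rw [bflip_invol])
  have step2 : 2 * (∑ v : Fin (∑ l, n l) → Bool, ∑ c : Fin (∑ l, n l),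
        (g v - g (bflip c v)))
      = ∑ c : Fin (∑ l, n l), ∑ v : Fin (∑ l, n l) → Bool,
          Nat.dist (g v) (g (bflip c v)) := by
    rw [Finset.sum_comm, two_mul, ← Finset.sum_add_distrib]
    refine Finset.sum_congr rfl fun c _ => ?_
    nth_rewrite 2 [hA2 c]
    rw [← Finset.sum_add_distrib]
    refine Finset.sum_congr rfl fun v _ => ?_
    rw [Nat.dist]
  have step3 : (∑ c : Fin (∑ l, n l), ∑ v : Fin (∑ l, n l) → Bool,
        Nat.dist (g v) (g (bflip c v)))
      = 2 ^ ((∑ l, n l) - n i) * W (n i) := by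
    have hvan : ∀ c ∈ (Finset.univ : Finset (Fin (∑ l, n l))),
        c ∉ Finset.image (blockPos n i) Finset.univ →
          (∑ v : Fin (∑ l, n l) → Bool, Nat.dist (g v) (g (bflip c v))) = 0 := by
      intro c _ hc
      refine Finset.sum_eq_zero fun v _ => ?_
      have hnt : ∀ t, blockPos n i t ≠ c := fun t ht =>
        hc (ht ▸ Finset.mem_image_of_mem _ (Finset.mem_univ t))
      simp only [hg]
      rw [block_bflip_ne n i c hnt v]
      exact Nat.dist_self _
    rw [← Finset.sum_subset (Finset.subset_univ _) hvan,
      Finset.sum_image (fun t _ t' _ h => blockPos_injective n i h)]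
    have hterm : ∀ t : Fin (n i),
        (∑ v : Fin (∑ l, n l) → Bool, Nat.dist (g v) (g (bflip (blockPos n i t) v)))
          = ∑ v : Fin (∑ l, n l) → Bool,
              (fun a => Nat.dist (gray (n i) a) (gray (n i) (bflip t a)))
                (v ∘ blockPos n i) := by
      intro t
      refine Finset.sum_congr rfl fun v _ => ?_
      simp only [hg]
      rw [block_bflip_eq]
      rfl
    have h4 : (∑ t : Fin (n i), ∑ v : Fin (∑ l, n l) → Bool,
          (fun a => Nat.dist (gray (n i) a) (gray (n i) (bflip t a))) (v ∘ blockPos n i))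
        = ∑ t : Fin (n i), 2 ^ ((∑ l, n l) - n i) *
            ∑ a : Fin (n i) → Bool, Nat.dist (gray (n i) a) (gray (n i) (bflip t a)) :=
      Finset.sum_congr rfl fun t _ =>
        sum_comp_injective (blockPos n i) (blockPos_injective n i)
          (fun a => Nat.dist (gray (n i) a) (gray (n i) (bflip t a)))
    rw [Finset.sum_congr rfl (fun t _ => hterm t), h4, ← Finset.mul_sum]
    congr 1
    rw [W]
    exact Finset.sum_comm
  rw [step1]
  have hni := hn i
  have e1 : (2:ℕ) ^ (2 * n i) = 2 * 2 ^ (2 * n i - 1) := by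
    rw [← pow_succ']
    congr 1
    omega
  have e2 : (2:ℕ) ^ (n i) = 2 * 2 ^ (n i - 1) := by
    rw [← pow_succ']
    congr 1
    omega
  have efact : 2 ^ (2 * n i) - 2 ^ (n i)
      = 2 * (2 ^ (2 * n i - 1) - 2 ^ (n i - 1)) := by omega
  have hfin : 2 * (∑ v : Fin (∑ l, n l) → Bool, ∑ c : Fin (∑ l, n l),
        (g v - g (bflip c v)))
      = 2 * (2 ^ ((∑ l, n l) - n i) * (2 ^ (2 * n i - 1) - 2 ^ (n i - 1))) := by
    rw [step2.trans step3, W_eq, efact]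
    ring
  omega
end

section
/- Let H be a connected graph with 2^n vertices and let f : {0,1}^n → V(H) be a bijection. Suppose (L_i)_{i=1}^m is a partition of E(H) such that each L_i is an edge cut separating H into exactly two connected components, with l_i the vertex set of one component, and such that for every edge {u,v} of Q_n some shortest path P_f(u,v) in H between f(u) and f(v) crosses L_i exactly once if {u,v} has exactly one endpoint mapped into l_i and zero times otherwise. Then the wirelength of f, i.e. Σ_{{u,v} ∈ E(Q_n)} d_H(f(u), f(v)), equals Σ_{i=1}^m θ(n, f^{-1}(l_i)). -/
open Finset

lemma cubeAdj_comm {n : ℕ} (u v : Fin n → Bool) : cubeAdj u v ↔ cubeAdj v u := by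
  unfold cubeAdj
  rw [diffCount_comm]

lemma list_length_eq_sum_countP {α : Type*} [DecidableEq α] {m : ℕ} (L : Fin m → Finset α)
    (xs : List α) (h : ∀ e ∈ xs, ∃! i, e ∈ L i) :
    xs.length = ∑ i, xs.countP (fun e => decide (e ∈ L i)) := by
  induction xs with
  | nil => simp
  | cons a t ih =>
    simp only [List.countP_cons, List.length_cons, Finset.sum_add_distrib]
    have h1 : ∑ i : Fin m, (if decide (a ∈ L i) = true then 1 else 0) = 1 := by
      obtain ⟨i₀, hi₀, huniq⟩ := h a List.mem_cons_self
      rw [Finset.sum_eq_single i₀]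
      · simp [hi₀]
      · intro j _ hj
        simp only [ite_eq_right_iff, decide_eq_true_eq]
        intro hja
        exact absurd (huniq j hja) hj
      · simp
    rw [ih (fun e he => h e (List.mem_cons_of_mem _ he)), h1]

/-- The partition-of-edge-cuts lemma: if the edge set of the host `H` is partitioned
into edge cuts `L i`, each separating `H` into two components with `l i` one of the
induced vertex sets, and for each hypercube edge some shortest path crosses each `L i`
exactly once or not at all according to whether the edge lies on the boundary of
`f⁻¹(l i)`, then the wirelength of `f` equals `∑ i, θ(n, f⁻¹(l i))`. -/
theorem stmt18 (n : ℕ) {V : Type*} [Fintype V] [DecidableEq V]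
    (H : SimpleGraph V) [DecidableRel H.Adj]
    (hcard : Fintype.card V = 2 ^ n) (hconn : H.Connected)
    (f : (Fin n → Bool) → V) (hf : Function.Bijective f)
    (m : ℕ) (L : Fin m → Finset (Sym2 V)) (l : Fin m → Finset V)
    (hL : ∀ i, (L i : Set (Sym2 V)) ⊆ H.edgeSet)
    (hdisj : ∀ i j, i ≠ j → Disjoint (L i) (L j))
    (hcover : ∀ e ∈ H.edgeSet, ∃ i, e ∈ L i)
    (hcut : ∀ i,
      (l i).Nonempty ∧ (l i ≠ Finset.univ) ∧
      (∀ u ∈ l i, ∀ v ∉ l i, ¬ (H.deleteEdges (L i : Set (Sym2 V))).Reachable u v) ∧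
      (∀ u ∈ l i, ∀ v ∈ l i, (H.deleteEdges (L i : Set (Sym2 V))).Reachable u v) ∧
      (∀ u ∉ l i, ∀ v ∉ l i, (H.deleteEdges (L i : Set (Sym2 V))).Reachable u v))
    (P : ∀ u v : Fin n → Bool, cubeAdj u v → H.Walk (f u) (f v))
    (hP : ∀ u v h, (P u v h).length = H.dist (f u) (f v))
    (hcross : ∀ u v h, ∀ i : Fin m,
      ((P u v h).edges.countP (fun e => decide (e ∈ L i))) =
        if (f u ∈ l i ∧ f v ∉ l i) ∨ (f v ∈ l i ∧ f u ∉ l i) then 1 else 0) :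
    wirelength (fun a b => H.dist a b) f =
      ∑ i, theta n (Finset.univ.filter fun v => f v ∈ l i) := by
  classical
  have hdist : ∀ u v : Fin n → Bool, ∀ h : cubeAdj u v,
      H.dist (f u) (f v) =
        ∑ i, (if (f u ∈ l i ∧ f v ∉ l i) ∨ (f v ∈ l i ∧ f u ∉ l i) then 1 else 0) := by
    intro u v h
    have h1 : H.dist (f u) (f v) = (P u v h).edges.length := by
      rw [← hP u v h, SimpleGraph.Walk.length_edges]
    rw [h1]
    have huniq : ∀ e ∈ (P u v h).edges, ∃! i, e ∈ L i := by
      intro e he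
      obtain ⟨i, hi⟩ := hcover e ((P u v h).edges_subset_edgeSet he)
      refine ⟨i, hi, fun j hj => ?_⟩
      by_contra hne
      exact (Finset.disjoint_left.mp (hdisj j i hne)) hj hi
    rw [list_length_eq_sum_countP L _ huniq]
    exact Finset.sum_congr rfl fun i _ => hcross u v h i
  have key : (∑ u : Fin n → Bool, ∑ v : Fin n → Bool,
      if cubeAdj u v then H.dist (f u) (f v) else 0) =
      2 * ∑ i, theta n (Finset.univ.filter fun v => f v ∈ l i) := by
    have step1 : (∑ u : Fin n → Bool, ∑ v : Fin n → Bool,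
        if cubeAdj u v then H.dist (f u) (f v) else 0) =
        ∑ u : Fin n → Bool, ∑ v : Fin n → Bool, ∑ i,
          ((if f u ∈ l i ∧ f v ∉ l i ∧ cubeAdj u v then 1 else 0) +
           (if f v ∈ l i ∧ f u ∉ l i ∧ cubeAdj u v then 1 else 0)) := by
      refine Finset.sum_congr rfl fun u _ => Finset.sum_congr rfl fun v _ => ?_
      by_cases h : cubeAdj u v
      · rw [if_pos h, hdist u v h]
        refine Finset.sum_congr rfl fun i _ => ?_
        by_cases hA : f u ∈ l i <;> by_cases hB : f v ∈ l i <;> simp [hA, hB, h]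
      · simp [h]
    rw [step1]
    have step2 : (∑ u : Fin n → Bool, ∑ v : Fin n → Bool, ∑ i,
          ((if f u ∈ l i ∧ f v ∉ l i ∧ cubeAdj u v then 1 else 0) +
           (if f v ∈ l i ∧ f u ∉ l i ∧ cubeAdj u v then 1 else 0))) =
        ∑ i, ∑ u : Fin n → Bool, ∑ v : Fin n → Bool,
          ((if f u ∈ l i ∧ f v ∉ l i ∧ cubeAdj u v then 1 else 0) +
           (if f v ∈ l i ∧ f u ∉ l i ∧ cubeAdj u v then 1 else 0)) := by
      rw [show (∑ u : Fin n → Bool, ∑ v : Fin n → Bool, ∑ i,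
          ((if f u ∈ l i ∧ f v ∉ l i ∧ cubeAdj u v then 1 else 0) +
           (if f v ∈ l i ∧ f u ∉ l i ∧ cubeAdj u v then 1 else 0))) =
        ∑ u : Fin n → Bool, ∑ i, ∑ v : Fin n → Bool,
          ((if f u ∈ l i ∧ f v ∉ l i ∧ cubeAdj u v then 1 else 0) +
           (if f v ∈ l i ∧ f u ∉ l i ∧ cubeAdj u v then 1 else 0)) from
        Finset.sum_congr rfl fun u _ => Finset.sum_comm]
      exact Finset.sum_comm
    rw [step2, Finset.mul_sum]
    refine Finset.sum_congr rfl fun i _ => ?_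
    simp only [Finset.sum_add_distrib]
    have hthetaA : (∑ u : Fin n → Bool, ∑ v : Fin n → Bool,
        if f u ∈ l i ∧ f v ∉ l i ∧ cubeAdj u v then 1 else 0) =
        theta n (Finset.univ.filter fun v => f v ∈ l i) := by
      rw [theta, Finset.card_filter, Finset.sum_product]
      refine Finset.sum_congr rfl fun u _ => Finset.sum_congr rfl fun v _ => ?_
      simp [Finset.mem_filter]
    have hthetaB : (∑ u : Fin n → Bool, ∑ v : Fin n → Bool,
        if f v ∈ l i ∧ f u ∉ l i ∧ cubeAdj u v then 1 else 0) =
        theta n (Finset.univ.filter fun v => f v ∈ l i) := by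
      rw [Finset.sum_comm, ← hthetaA]
      refine Finset.sum_congr rfl fun u _ => Finset.sum_congr rfl fun v _ => ?_
      exact if_congr (and_congr_right fun _ => and_congr_right fun _ => cubeAdj_comm v u)
        rfl rfl
    rw [hthetaA, hthetaB, two_mul]
  rw [wirelength, key, Nat.mul_div_cancel_left _ two_pos]
end
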